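/- Let L > 0, a > 0 and u₀ > 0. For all functions u, ũ : ℝ → ℂ that are three times continuously differentiable on [0,L] and satisfy u(0) = u(L) = 0, u′(L) = 0, ũ(0) = ũ(L) = 0, ũ′(L) = 0, one has Re ∫₀^L (Au(x) − Aũ(x)) · conj(u(x) − ũ(x)) dx ≤ 0, where Au := −u″′ − u′ − a·sat_ℂ(u). In other words, the Korteweg–de Vries operator with saturated feedback is dissipative on such functions. -/

import Mathlib

open Set MeasureTheory Complex

/-- The saturation function with level `u₀`. -/
noncomputable def sat (u₀ s : ℝ) : ℝ :=
  if s < -u₀ then -u₀ else if s ≤ u₀ then s else u₀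

/-- The complex saturation function: `sat_ℂ(s) = sat(Re s) + i·sat(Im s)`. -/
noncomputable def satC (u₀ : ℝ) (s : ℂ) : ℂ :=
  (sat u₀ s.re : ℂ) + (sat u₀ s.im : ℂ) * Complex.I

lemma sat_cont (u₀ : ℝ) (h : 0 ≤ u₀) : Continuous (sat u₀) := by
  have : sat u₀ = fun s => max (-u₀) (min s u₀) := by
    funext s; simp only [sat, max_def, min_def]; split_ifs <;> linarith
  rw [this]
  exact continuous_const.max (continuous_id.min continuous_const)

lemma satC_cont (u₀ : ℝ) (h : 0 ≤ u₀) : Continuous (satC u₀) := by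
  unfold satC
  exact ((Complex.continuous_ofReal.comp ((sat_cont u₀ h).comp Complex.continuous_re)).add
    ((Complex.continuous_ofReal.comp ((sat_cont u₀ h).comp Complex.continuous_im)).mul
      continuous_const))

lemma sat_dissip (u₀ : ℝ) (h : 0 ≤ u₀) (p q : ℝ) : 0 ≤ (sat u₀ p - sat u₀ q) * (p - q) := by
  unfold sat; split_ifs <;> nlinarith

lemma satC_re (u₀ : ℝ) (s : ℂ) : (satC u₀ s).re = sat u₀ s.re := by simp [satC]

lemma satC_im (u₀ : ℝ) (s : ℂ) : (satC u₀ s).im = sat u₀ s.im := by simp [satC]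

lemma satC_dissip (u₀ : ℝ) (h : 0 ≤ u₀) (p q : ℂ) :
    0 ≤ ((satC u₀ p - satC u₀ q) * (starRingEnd ℂ) (p - q)).re := by
  have h1 := sat_dissip u₀ h p.re q.re
  have h2 := sat_dissip u₀ h p.im q.im
  simp only [Complex.mul_re, Complex.sub_re, Complex.sub_im, Complex.conj_re, Complex.conj_im,
    satC_re, satC_im]
  nlinarith

theorem kdv_sat_operator_dissipative (L a u₀ : ℝ)
    (hL : 0 < L) (ha : 0 < a) (hu₀ : 0 < u₀)
    (u u₁ u₂ u₃ v v₁ v₂ v₃ : ℝ → ℂ)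
    (hu₁ : ∀ x ∈ Set.Icc (0:ℝ) L, HasDerivWithinAt u (u₁ x) (Set.Icc 0 L) x)
    (hu₂ : ∀ x ∈ Set.Icc (0:ℝ) L, HasDerivWithinAt u₁ (u₂ x) (Set.Icc 0 L) x)
    (hu₃ : ∀ x ∈ Set.Icc (0:ℝ) L, HasDerivWithinAt u₂ (u₃ x) (Set.Icc 0 L) x)
    (hu₃cont : ContinuousOn u₃ (Set.Icc 0 L))
    (hv₁ : ∀ x ∈ Set.Icc (0:ℝ) L, HasDerivWithinAt v (v₁ x) (Set.Icc 0 L) x)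
    (hv₂ : ∀ x ∈ Set.Icc (0:ℝ) L, HasDerivWithinAt v₁ (v₂ x) (Set.Icc 0 L) x)
    (hv₃ : ∀ x ∈ Set.Icc (0:ℝ) L, HasDerivWithinAt v₂ (v₃ x) (Set.Icc 0 L) x)
    (hv₃cont : ContinuousOn v₃ (Set.Icc 0 L))
    (hubc0 : u 0 = 0) (hubcL : u L = 0) (hubc1 : u₁ L = 0)
    (hvbc0 : v 0 = 0) (hvbcL : v L = 0) (hvbc1 : v₁ L = 0) :
    (∫ x in (0:ℝ)..L,
        ((-u₃ x - u₁ x - a * satC u₀ (u x)) - (-v₃ x - v₁ x - a * satC u₀ (v x)))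
          * (starRingEnd ℂ) (u x - v x)).re ≤ 0 := by
  have hL' : (0:ℝ) ≤ L := hL.le
  have hIcc : Set.uIcc (0:ℝ) L = Set.Icc 0 L := Set.uIcc_of_le hL'
  -- continuity facts
  have hcu : ContinuousOn u (Set.Icc 0 L) := fun x hx => (hu₁ x hx).continuousWithinAt
  have hcu₁ : ContinuousOn u₁ (Set.Icc 0 L) := fun x hx => (hu₂ x hx).continuousWithinAt
  have hcu₂ : ContinuousOn u₂ (Set.Icc 0 L) := fun x hx => (hu₃ x hx).continuousWithinAt
  have hcv : ContinuousOn v (Set.Icc 0 L) := fun x hx => (hv₁ x hx).continuousWithinAt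
  have hcv₁ : ContinuousOn v₁ (Set.Icc 0 L) := fun x hx => (hv₂ x hx).continuousWithinAt
  have hcv₂ : ContinuousOn v₂ (Set.Icc 0 L) := fun x hx => (hv₃ x hx).continuousWithinAt
  have hcw : ContinuousOn (fun x => u x - v x) (Set.Icc 0 L) := hcu.sub hcv
  have hcw₁ : ContinuousOn (fun x => u₁ x - v₁ x) (Set.Icc 0 L) := hcu₁.sub hcv₁
  have hcw₂ : ContinuousOn (fun x => u₂ x - v₂ x) (Set.Icc 0 L) := hcu₂.sub hcv₂
  have hcw₃ : ContinuousOn (fun x => u₃ x - v₃ x) (Set.Icc 0 L) := hu₃cont.sub hv₃cont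
  have hconj : Continuous (starRingEnd ℂ) := Complex.continuous_conj
  have hcwC : ContinuousOn (fun x => (starRingEnd ℂ) (u x - v x)) (Set.Icc 0 L) :=
    hconj.comp_continuousOn hcw
  have hcwC₁ : ContinuousOn (fun x => (starRingEnd ℂ) (u₁ x - v₁ x)) (Set.Icc 0 L) :=
    hconj.comp_continuousOn hcw₁
  have hcwC₂ : ContinuousOn (fun x => (starRingEnd ℂ) (u₂ x - v₂ x)) (Set.Icc 0 L) :=
    hconj.comp_continuousOn hcw₂
  have hcwC₃ : ContinuousOn (fun x => (starRingEnd ℂ) (u₃ x - v₃ x)) (Set.Icc 0 L) :=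
    hconj.comp_continuousOn hcw₃
  have hcsat : ContinuousOn (fun x => satC u₀ (u x) - satC u₀ (v x)) (Set.Icc 0 L) :=
    ((satC_cont u₀ hu₀.le).comp_continuousOn hcu).sub ((satC_cont u₀ hu₀.le).comp_continuousOn hcv)
  -- integrability facts
  have hint : ∀ (f : ℝ → ℂ), ContinuousOn f (Set.Icc 0 L) → IntervalIntegrable f volume 0 L := by
    intro f hf
    exact ContinuousOn.intervalIntegrable (by rwa [hIcc])
  have hint1 : IntervalIntegrable (fun x => (u₁ x - v₁ x) * (starRingEnd ℂ) (u x - v x)) volume 0 L :=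
    hint _ (hcw₁.mul hcwC)
  have hint1' : IntervalIntegrable (fun x => (u x - v x) * (starRingEnd ℂ) (u₁ x - v₁ x)) volume 0 L :=
    hint _ (hcw.mul hcwC₁)
  have hint3 : IntervalIntegrable (fun x => (u₃ x - v₃ x) * (starRingEnd ℂ) (u x - v x)) volume 0 L :=
    hint _ (hcw₃.mul hcwC)
  have hint3' : IntervalIntegrable (fun x => (u x - v x) * (starRingEnd ℂ) (u₃ x - v₃ x)) volume 0 L :=
    hint _ (hcw.mul hcwC₃)
  have hintS : IntervalIntegrable (fun x => (satC u₀ (u x) - satC u₀ (v x)) * (starRingEnd ℂ) (u x - v x)) volume 0 L :=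
    hint _ (hcsat.mul hcwC)
  -- FTC helper
  have ftc : ∀ (F G : ℝ → ℂ), (∀ x ∈ Set.Icc (0:ℝ) L, HasDerivWithinAt F (G x) (Set.Icc 0 L) x) →
      ContinuousOn G (Set.Icc 0 L) → ∫ x in (0:ℝ)..L, G x = F L - F 0 := by
    intro F G hd hc
    refine intervalIntegral.integral_eq_sub_of_hasDeriv_right_of_le hL'
      (fun x hx => (hd x hx).continuousWithinAt) (fun x hx => ?_) (hint _ hc)
    exact ((hd x (Set.Ioo_subset_Icc_self hx)).hasDerivAt (Icc_mem_nhds hx.1 hx.2)).hasDerivWithinAt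
  -- derivative helpers (within Icc)
  have hdw : ∀ x ∈ Set.Icc (0:ℝ) L, HasDerivWithinAt (fun y => u y - v y) (u₁ x - v₁ x) (Set.Icc 0 L) x :=
    fun x hx => (hu₁ x hx).sub (hv₁ x hx)
  have hdw₁ : ∀ x ∈ Set.Icc (0:ℝ) L, HasDerivWithinAt (fun y => u₁ y - v₁ y) (u₂ x - v₂ x) (Set.Icc 0 L) x :=
    fun x hx => (hu₂ x hx).sub (hv₂ x hx)
  have hdw₂ : ∀ x ∈ Set.Icc (0:ℝ) L, HasDerivWithinAt (fun y => u₂ y - v₂ y) (u₃ x - v₃ x) (Set.Icc 0 L) x :=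
    fun x hx => (hu₃ x hx).sub (hv₃ x hx)
  -- Identity A : ∫ (w₁ ⬝ conj w + w ⬝ conj w₁) = 0
  have keyA : (∫ x in (0:ℝ)..L, ((u₁ x - v₁ x) * (starRingEnd ℂ) (u x - v x)
      + (u x - v x) * (starRingEnd ℂ) (u₁ x - v₁ x))) = 0 := by
    have := ftc (fun y => (u y - v y) * (starRingEnd ℂ) (u y - v y))
      (fun x => (u₁ x - v₁ x) * (starRingEnd ℂ) (u x - v x)
        + (u x - v x) * (starRingEnd ℂ) (u₁ x - v₁ x))
      (fun x hx => by
        have h := (hdw x hx).mul ((hdw x hx).star)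
        simp only [starRingEnd_apply]
        exact h)
      ((hcw₁.mul hcwC).add (hcw.mul hcwC₁))
    rw [this]
    simp [hubcL, hvbcL, hubc0, hvbc0]
  -- Identity B : ∫ (w₃ ⬝ conj w + w ⬝ conj w₃) = normSq (w₁ 0)
  have keyB : (∫ x in (0:ℝ)..L, ((u₃ x - v₃ x) * (starRingEnd ℂ) (u x - v x)
      + (u x - v x) * (starRingEnd ℂ) (u₃ x - v₃ x)))
      = (Complex.normSq (u₁ 0 - v₁ 0) : ℂ) := by
    have := ftc (fun y => (u₂ y - v₂ y) * (starRingEnd ℂ) (u y - v y)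
        + (u y - v y) * (starRingEnd ℂ) (u₂ y - v₂ y)
        - (u₁ y - v₁ y) * (starRingEnd ℂ) (u₁ y - v₁ y))
      (fun x => (u₃ x - v₃ x) * (starRingEnd ℂ) (u x - v x)
        + (u x - v x) * (starRingEnd ℂ) (u₃ x - v₃ x))
      (fun x hx => by
        have h := (((hdw₂ x hx).mul ((hdw x hx).star)).add
          ((hdw x hx).mul ((hdw₂ x hx).star))).sub ((hdw₁ x hx).mul ((hdw₁ x hx).star))
        simp only [starRingEnd_apply]
        refine h.congr_deriv ?_
        ring)
      ((hcw₃.mul hcwC).add (hcw.mul hcwC₃))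
    rw [this]
    simp [hubcL, hvbcL, hubc1, hvbc1, hubc0, hvbc0, ← map_sub, Complex.mul_conj]
  -- conj of interval integral
  have conj_int : ∀ f : ℝ → ℂ, (starRingEnd ℂ) (∫ x in (0:ℝ)..L, f x)
      = ∫ x in (0:ℝ)..L, (starRingEnd ℂ) (f x) := by
    intro f
    rw [intervalIntegral.integral_of_le hL', intervalIntegral.integral_of_le hL', ← integral_conj]
  have hconjA : (starRingEnd ℂ) (∫ x in (0:ℝ)..L, (u₁ x - v₁ x) * (starRingEnd ℂ) (u x - v x))
      = ∫ x in (0:ℝ)..L, (u x - v x) * (starRingEnd ℂ) (u₁ x - v₁ x) := by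
    rw [conj_int]
    congr 1; funext x
    rw [map_mul, Complex.conj_conj, mul_comm]
  have hconjB : (starRingEnd ℂ) (∫ x in (0:ℝ)..L, (u₃ x - v₃ x) * (starRingEnd ℂ) (u x - v x))
      = ∫ x in (0:ℝ)..L, (u x - v x) * (starRingEnd ℂ) (u₃ x - v₃ x) := by
    rw [conj_int]
    congr 1; funext x
    rw [map_mul, Complex.conj_conj, mul_comm]
  set I₁ := ∫ x in (0:ℝ)..L, (u₁ x - v₁ x) * (starRingEnd ℂ) (u x - v x) with hI₁def
  set I₃ := ∫ x in (0:ℝ)..L, (u₃ x - v₃ x) * (starRingEnd ℂ) (u x - v x) with hI₃def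
  set IS := ∫ x in (0:ℝ)..L, (satC u₀ (u x) - satC u₀ (v x)) * (starRingEnd ℂ) (u x - v x)
    with hISdef
  -- Re I₁ = 0
  have hA : I₁ + (starRingEnd ℂ) I₁ = 0 := by
    rw [hconjA, hI₁def, ← intervalIntegral.integral_add hint1 hint1']
    exact keyA
  have hI₁re : I₁.re = 0 := by
    rw [Complex.add_conj] at hA
    have := Complex.ofReal_eq_zero.mp hA
    linarith
  -- 2 Re I₃ = normSq (w₁ 0) ≥ 0
  have hB : I₃ + (starRingEnd ℂ) I₃ = (Complex.normSq (u₁ 0 - v₁ 0) : ℂ) := by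
    rw [hconjB, hI₃def, ← intervalIntegral.integral_add hint3 hint3']
    exact keyB
  have hI₃re : 0 ≤ I₃.re := by
    rw [Complex.add_conj] at hB
    have h2 : 2 * I₃.re = Complex.normSq (u₁ 0 - v₁ 0) := Complex.ofReal_injective hB
    have := Complex.normSq_nonneg (u₁ 0 - v₁ 0)
    linarith
  -- Re IS ≥ 0
  have hISre : 0 ≤ IS.re := by
    have hcomm := Complex.reCLM.intervalIntegral_comp_comm hintS
    rw [hISdef]
    have : (∫ x in (0:ℝ)..L, ((satC u₀ (u x) - satC u₀ (v x)) * (starRingEnd ℂ) (u x - v x))).re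
        = ∫ x in (0:ℝ)..L, ((satC u₀ (u x) - satC u₀ (v x)) * (starRingEnd ℂ) (u x - v x)).re := by
      simpa using hcomm.symm
    rw [this]
    exact intervalIntegral.integral_nonneg hL'
      (fun x _ => satC_dissip u₀ hu₀.le (u x) (v x))
  -- assemble
  have hsplit : (∫ x in (0:ℝ)..L,
      ((-u₃ x - u₁ x - a * satC u₀ (u x)) - (-v₃ x - v₁ x - a * satC u₀ (v x)))
        * (starRingEnd ℂ) (u x - v x))
      = -I₃ - I₁ - (a : ℂ) * IS := by
    have heq : ∀ x, ((-u₃ x - u₁ x - a * satC u₀ (u x)) - (-v₃ x - v₁ x - a * satC u₀ (v x)))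
        * (starRingEnd ℂ) (u x - v x)
        = -((u₃ x - v₃ x) * (starRingEnd ℂ) (u x - v x))
          - ((u₁ x - v₁ x) * (starRingEnd ℂ) (u x - v x))
          - (a : ℂ) * ((satC u₀ (u x) - satC u₀ (v x)) * (starRingEnd ℂ) (u x - v x)) := by
      intro x; ring
    rw [intervalIntegral.integral_congr (fun x _ => heq x),
      intervalIntegral.integral_sub (hint (fun x => -((u₃ x - v₃ x) * (starRingEnd ℂ) (u x - v x)) - (u₁ x - v₁ x) * (starRingEnd ℂ) (u x - v x)) (((hcw₃.mul hcwC).neg).sub (hcw₁.mul hcwC)))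
        (hintS.const_mul _),
      intervalIntegral.integral_sub (hint (fun x => -((u₃ x - v₃ x) * (starRingEnd ℂ) (u x - v x))) (hcw₃.mul hcwC).neg) hint1,
      intervalIntegral.integral_neg, intervalIntegral.integral_const_mul]
  rw [hsplit]
  simp only [Complex.sub_re, Complex.neg_re, Complex.mul_re, Complex.ofReal_re,
    Complex.ofReal_im]
  nlinarith [mul_nonneg ha.le hISre]
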